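/- Let δ, s > 0 and X ⊂ [0,1]^m with H^s_{δ,∞}(X) = κ > 0. Then there exists a (δ,s)-subset P ⊂ X with cardinality #P ≳ κ δ^{-s}. -/

import Mathlib

open Metric Set MeasureTheory
open scoped ENNReal

set_option maxHeartbeats 1000000

noncomputable section

/-- The dyadic cube of side `2^{-k}` indexed by `z ∈ ℕ^m`. -/
def dyCube (m k : ℕ) (z : Fin m → ℕ) : Set (Fin m → ℝ) :=
  {x | ∀ i, (z i : ℝ) / 2 ^ k ≤ x i ∧ x i < ((z i : ℝ) + 1) / 2 ^ k}

/-- The `δ`-truncated `s`-dimensional Hausdorff content via coverings by dyadic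
cubes of side length `≥ δ`. -/
def dyContent (m : ℕ) (s δ : ℝ) (X : Set (Fin m → ℝ)) : ℝ≥0∞ :=
  ⨅ (𝒞 : (k : ℕ) → Set (Fin m → ℕ))
    (_ : (∀ k, (𝒞 k).Finite) ∧ (∀ k, 𝒞 k ≠ ∅ → δ ≤ (2:ℝ)⁻¹ ^ k) ∧
          X ⊆ ⋃ k, ⋃ z ∈ 𝒞 k, dyCube m k z),
    ∑' k, ((𝒞 k).ncard : ℝ≥0∞) * (((2:ℝ≥0∞)⁻¹ ^ k) ^ (s : ℝ))

/-- `F` is a `(δ,s)`-set with counting constant `C`. -/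
def IsDeltaSet {α : Type*} [PseudoMetricSpace α] (δ s C : ℝ) (F : Finset α) : Prop :=
  (∀ x ∈ F, ∀ y ∈ F, x ≠ y → δ ≤ dist x y) ∧
  ∀ (x : α) (r : ℝ), δ ≤ r → r ≤ 1 →
    (((F : Set α) ∩ closedBall x r).ncard : ℝ) ≤ C * (r / δ) ^ s

lemma mem_dyCube_anc {m N k : ℕ} (hk : k ≤ N) (z : Fin m → ℕ) {x : Fin m → ℝ}
    (hx : x ∈ dyCube m N z) : x ∈ dyCube m k (fun i => z i / 2 ^ (N - k)) := by
  intro i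
  obtain ⟨h1, h2⟩ := hx i
  have h2k : (0:ℝ) < 2 ^ k := by positivity
  have h2N : (0:ℝ) < 2 ^ N := by positivity
  have h2nk : (0:ℝ) < 2 ^ (N - k) := by positivity
  have hpow : (2:ℝ) ^ (N - k) * 2 ^ k = 2 ^ N := by
    rw [← pow_add]; congr 1; omega
  set q := z i / 2 ^ (N - k) with hq
  have hql : q * 2 ^ (N - k) ≤ z i := Nat.div_mul_le_self _ _
  have hqu : z i < (q + 1) * 2 ^ (N - k) := by
    have hd : 0 < 2 ^ (N - k) := Nat.pow_pos (by norm_num)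
    exact (Nat.div_lt_iff_lt_mul hd).mp (Nat.lt_succ_self q)
  have hql' : (q:ℝ) * 2 ^ (N - k) ≤ z i := by exact_mod_cast hql
  have hqu' : (z i : ℝ) + 1 ≤ ((q:ℝ) + 1) * 2 ^ (N - k) := by exact_mod_cast hqu
  have hxl : (z i : ℝ) ≤ x i * 2 ^ N := by
    rw [div_le_iff₀ h2N] at h1; linarith
  have hxu : x i * 2 ^ N < (z i : ℝ) + 1 := by
    rw [lt_div_iff₀ h2N] at h2; linarith
  constructor
  · rw [div_le_iff₀ h2k]
    nlinarith
  · rw [lt_div_iff₀ h2k]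
    nlinarith

lemma dyCube_disj {m k : ℕ} {z z' : Fin m → ℕ} (h : z ≠ z') {x : Fin m → ℝ}
    (hx : x ∈ dyCube m k z) (hx' : x ∈ dyCube m k z') : False := by
  have : ∃ i, z i ≠ z' i := by
    by_contra hc; push_neg at hc; exact h (funext hc)
  obtain ⟨i, hi⟩ := this
  obtain ⟨h1, h2⟩ := hx i
  obtain ⟨h1', h2'⟩ := hx' i
  have h2k : (0:ℝ) < 2 ^ k := by positivity
  rcases lt_or_gt_of_ne hi with hlt | hlt
  · have : ((z i : ℝ) + 1) / 2 ^ k ≤ (z' i : ℝ) / 2 ^ k := by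
      gcongr
      exact_mod_cast hlt
    linarith
  · have : ((z' i : ℝ) + 1) / 2 ^ k ≤ (z i : ℝ) / 2 ^ k := by
      gcongr
      exact_mod_cast hlt
    linarith

lemma arith_half {t : ℝ} {n : ℕ} (h1 : 1 ≤ t) (h2 : t < n + 1) : t ≤ 2 * n := by
  have hn : 1 ≤ (n:ℝ) := by
    have h0 : (0:ℝ) < n := by linarith
    have : 0 < n := by exact_mod_cast h0
    exact_mod_cast this
  rcases le_or_gt t 2 with h | h
  · linarith
  · linarith

/-- if `X ⊆ [0,1]^m` has `H^s_{δ,∞}(X) = κ > 0`, then `X`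
contains a `(δ,s)`-subset `P` with `#P ≳ κ δ^{-s}`. -/
theorem delta_set_inside_content (m : ℕ) (s : ℝ) (hs : 0 < s) :
    ∃ C > (0:ℝ), ∃ c > (0:ℝ),
      ∀ (δ : ℝ), 0 < δ → ∀ (κ : ℝ), 0 < κ →
        ∀ X : Set (Fin m → ℝ), X ⊆ {x | ∀ i, x i ∈ Icc (0:ℝ) 1} →
          dyContent m s δ X = ENNReal.ofReal κ →
            ∃ P : Finset (Fin m → ℝ), (P : Set (Fin m → ℝ)) ⊆ X ∧
              IsDeltaSet δ s C P ∧ c * (κ * δ ^ (-s)) ≤ (P.card : ℝ) := by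
  classical
  have h2s : (0:ℝ) < (2:ℝ) ^ s := Real.rpow_pos_of_pos two_pos s
  refine ⟨3 ^ m * (2:ℝ) ^ s, by positivity, (2 * (2:ℝ) ^ s * 2 ^ m)⁻¹, by positivity, ?_⟩
  intro δ hδ κ hκ X hXsub hcont
  have hκ0 : ENNReal.ofReal κ ≠ 0 := by
    exact ne_of_gt (ENNReal.ofReal_pos.mpr hκ)
  -- X is nonempty
  have hXne : X.Nonempty := by
    by_contra h
    rw [Set.not_nonempty_iff_eq_empty] at h
    have h0 : dyContent m s δ X ≤ 0 := by
      have hle : dyContent m s δ X ≤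
          ∑' k, (((fun _ => (∅ : Set (Fin m → ℕ))) k).ncard : ℝ≥0∞) *
            (((2:ℝ≥0∞)⁻¹ ^ k) ^ (s : ℝ)) := by
        refine iInf_le_of_le (fun _ => ∅) (iInf_le_of_le ?_ le_rfl)
        exact ⟨fun _ => Set.finite_empty, fun k hk => absurd rfl hk, by simp [h]⟩
      simpa using hle
    rw [hcont] at h0
    exact hκ0 (le_antisymm h0 bot_le)
  -- δ ≤ 1
  have hδ1 : δ ≤ 1 := by
    by_contra hgt
    push_neg at hgt
    have hne : dyContent m s δ X ≠ ⊤ := by rw [hcont]; exact ENNReal.ofReal_ne_top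
    have hex : ∃ 𝒞 : (k : ℕ) → Set (Fin m → ℕ),
        (∀ k, (𝒞 k).Finite) ∧ (∀ k, 𝒞 k ≠ ∅ → δ ≤ (2:ℝ)⁻¹ ^ k) ∧
          X ⊆ ⋃ k, ⋃ z ∈ 𝒞 k, dyCube m k z := by
      by_contra hno
      apply hne
      rw [dyContent, iInf_eq_top]
      intro 𝒞
      exact iInf_neg (fun hp => hno ⟨𝒞, hp⟩)
    obtain ⟨𝒞, h1, h2, h3⟩ := hex
    obtain ⟨x, hx⟩ := hXne
    obtain ⟨_, ⟨k, rfl⟩, hk⟩ := h3 hx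
    simp only [Set.mem_iUnion] at hk
    obtain ⟨z, hz, _⟩ := hk
    have := h2 k (by intro he; rw [he] at hz; exact hz)
    have : (2:ℝ)⁻¹ ^ k ≤ 1 := pow_le_one₀ (by norm_num) (by norm_num)
    linarith
  -- choice of N
  obtain ⟨N, hδN, hNδ⟩ : ∃ N : ℕ, δ ≤ (2:ℝ)⁻¹ ^ N ∧ (2:ℝ)⁻¹ ^ (N + 1) < δ := by
    have hex : ∃ n : ℕ, (2:ℝ)⁻¹ ^ n < δ := exists_pow_lt_of_lt_one hδ (by norm_num)
    have hn0 : Nat.find hex ≠ 0 := by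
      intro h0
      have := Nat.find_spec hex
      rw [h0] at this
      simp at this; linarith
    refine ⟨Nat.find hex - 1, ?_, ?_⟩
    · have := Nat.find_min hex (m := Nat.find hex - 1) (by omega)
      push_neg at this
      exact this
    · have := Nat.find_spec hex
      rwa [show Nat.find hex - 1 + 1 = Nat.find hex by omega]
  -- basic quantities
  have h2NR : (0:ℝ) < 2 ^ N := by positivity
  set pr : ℕ → (Fin m → ℕ) → Fin m → ℕ := fun k z i => z i / 2 ^ (N - k) with hprdef
  set T : ℕ → ℝ := fun k => ((2:ℝ) ^ (N - k)) ^ s with hTdef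
  have hT1 : ∀ k, 1 ≤ T k := fun k =>
    Real.one_le_rpow (one_le_pow₀ (by norm_num)) hs.le
  have hT0 : ∀ k, 0 ≤ T k := fun k => le_trans zero_le_one (hT1 k)
  have hTN : T N = 1 := by simp [hTdef]
  have hprN : ∀ z, pr N z = z := by
    intro z; funext i; simp [hprdef]
  -- the collection of level-N dyadic cubes meeting X
  set box : Finset (Fin m → ℕ) := Fintype.piFinset (fun _ => Finset.range (2 ^ N + 1))
    with hboxdef
  set D : Finset (Fin m → ℕ) := box.filter (fun z => (X ∩ dyCube m N z).Nonempty)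
    with hDdef
  set p : (Fin m → ℕ) → Fin m → ℝ :=
    fun z => if h : (X ∩ dyCube m N z).Nonempty then h.choose else fun _ => 0 with hpdef
  have hpmem : ∀ z ∈ D, p z ∈ X ∩ dyCube m N z := by
    intro z hz
    rw [hDdef, Finset.mem_filter] at hz
    rw [hpdef]; dsimp only
    rw [dif_pos hz.2]
    exact hz.2.choose_spec
  -- every point of X lies in a cube from D
  have hXcube : ∀ x ∈ X, ∃ z ∈ D, x ∈ dyCube m N z := by
    intro x hx
    have hxi := hXsub hx
    refine ⟨fun i => ⌊x i * 2 ^ N⌋₊, ?_, ?_⟩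
    · rw [hDdef, Finset.mem_filter]
      constructor
      · rw [hboxdef, Fintype.mem_piFinset]
        intro i
        rw [Finset.mem_range, Nat.lt_succ_iff]
        calc ⌊x i * 2 ^ N⌋₊ ≤ ⌊(2:ℝ) ^ N⌋₊ := by
              apply Nat.floor_le_floor
              nlinarith [(hxi i).2, (hxi i).1]
          _ = 2 ^ N := by
              rw [show ((2:ℝ) ^ N) = ((2 ^ N : ℕ) : ℝ) by push_cast; ring, Nat.floor_natCast]
      · exact ⟨x, hx, fun i => ⟨by
          rw [div_le_iff₀ h2NR]
          exact Nat.floor_le (by nlinarith [(hxi i).1]), by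
          rw [lt_div_iff₀ h2NR]
          exact Nat.lt_floor_add_one _⟩⟩
    · intro i
      constructor
      · rw [div_le_iff₀ h2NR]
        exact Nat.floor_le (by nlinarith [(hxi i).1])
      · rw [lt_div_iff₀ h2NR]
        exact Nat.lt_floor_add_one _
  -- a maximal "uniformly s-sparse" subset S of D
  set Good : Finset (Fin m → ℕ) → Prop := fun S => S ⊆ D ∧
    ∀ k ≤ N, ∀ w, ((S.filter (fun z => pr k z = w)).card : ℝ) ≤ T k with hGooddef
  have hGoodEmpty : Good ∅ := by
    refine ⟨Finset.empty_subset _, fun k hk w => ?_⟩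
    simp [hT0 k]
  obtain ⟨S, hSGood, hSmax⟩ : ∃ S, Good S ∧ ∀ S', Good S' → S'.card ≤ S.card := by
    obtain ⟨S, hS1, hS2⟩ := Finset.exists_max_image
      (D.powerset.filter (fun S => Good S)) Finset.card
      ⟨∅, by
        simp only [Finset.mem_filter, Finset.mem_powerset]
        exact ⟨Finset.empty_subset _, hGoodEmpty⟩⟩
    rw [Finset.mem_filter] at hS1
    exact ⟨S, hS1.2, fun S' hS' => hS2 S' (by
      rw [Finset.mem_filter, Finset.mem_powerset]; exact ⟨hS'.1, hS'⟩)⟩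
  -- every cube of D has a saturated ancestor level
  have hsatex : ∀ z ∈ D, ∃ k, k ≤ N ∧
      T k ≤ 2 * ((S.filter (fun z' => pr k z' = pr k z)).card : ℝ) := by
    intro z hz
    by_cases hzS : z ∈ S
    · refine ⟨N, le_rfl, ?_⟩
      rw [hTN]
      have h1 : z ∈ S.filter (fun z' => pr N z' = pr N z) := by
        rw [Finset.mem_filter]; exact ⟨hzS, rfl⟩
      have : 1 ≤ (S.filter (fun z' => pr N z' = pr N z)).card :=
        Finset.card_pos.mpr ⟨z, h1⟩
      have : (1:ℝ) ≤ ((S.filter (fun z' => pr N z' = pr N z)).card : ℝ) := by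
        exact_mod_cast this
      linarith
    · have hnotGood : ¬ Good (insert z S) := by
        intro hG
        have := hSmax _ hG
        rw [Finset.card_insert_of_notMem hzS] at this
        omega
      simp only [hGooddef] at hnotGood
      push_neg at hnotGood
      have hsub : insert z S ⊆ D := by
        intro y hy
        rcases Finset.mem_insert.mp hy with rfl | hy'
        · exact hz
        · exact hSGood.1 hy'
      obtain ⟨k, hkN, w, hw⟩ := hnotGood hsub
      have hwz : w = pr k z := by
        by_contra hne
        have heq : (insert z S).filter (fun z' => pr k z' = w) =
            S.filter (fun z' => pr k z' = w) := by
          rw [Finset.filter_insert, if_neg (fun h => hne h.symm)]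
        rw [heq] at hw
        exact absurd (hSGood.2 k hkN w) (not_le.mpr hw)
      subst hwz
      refine ⟨k, hkN, ?_⟩
      have heq : (insert z S).filter (fun z' => pr k z' = pr k z) =
          insert z (S.filter (fun z' => pr k z' = pr k z)) := by
        rw [Finset.filter_insert, if_pos rfl]
      rw [heq, Finset.card_insert_of_notMem (fun h => hzS (Finset.mem_filter.mp h).1)]
        at hw
      push_cast at hw
      exact arith_half (hT1 k) hw
  -- projections compose
  have hprcomp : ∀ j k, j ≤ k → k ≤ N → ∀ z : Fin m → ℕ,
      (fun i => pr k z i / 2 ^ (k - j)) = pr j z := by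
    intro j k hjk hkN z
    funext i
    simp only [hprdef]
    rw [Nat.div_div_eq_div_mul, ← pow_add]
    congr 2
    omega
  set sat : ℕ → (Fin m → ℕ) → Prop := fun k w =>
    T k ≤ 2 * ((S.filter (fun z' => pr k z' = w)).card : ℝ) with hsatdef
  set 𝒞 : ℕ → Finset (Fin m → ℕ) := fun k =>
    if k ≤ N then
      (S.image (pr k)).filter
        (fun w => sat k w ∧ ∀ j < k, ¬ sat j (fun i => w i / 2 ^ (k - j)))
    else ∅ with h𝒞def
  -- saturated cubes have nonempty fibers
  have hsatpos : ∀ k w, sat k w → ∃ z' ∈ S, pr k z' = w := by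
    intro k w hw
    rw [hsatdef] at hw
    have h1 := hT1 k
    have : 0 < (S.filter (fun z' => pr k z' = w)).card := by
      by_contra hc
      push_neg at hc
      rw [Nat.le_zero] at hc
      rw [hc] at hw
      norm_num at hw
      linarith
    obtain ⟨z', hz'⟩ := Finset.card_pos.mp this
    rw [Finset.mem_filter] at hz'
    exact ⟨z', hz'.1, hz'.2⟩

  set 𝒮 : ℕ → Set (Fin m → ℕ) := fun k => ((𝒞 k : Finset (Fin m → ℕ)) : Set (Fin m → ℕ))
    with h𝒮def
  have hcover : X ⊆ ⋃ k, ⋃ z ∈ 𝒮 k, dyCube m k z := by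
    intro x hx
    obtain ⟨z, hzD, hxz⟩ := hXcube x hx
    have hQ : ∃ k, k ≤ N ∧ sat k (pr k z) := by
      obtain ⟨k, hk1, hk2⟩ := hsatex z hzD
      exact ⟨k, hk1, hk2⟩
    obtain ⟨hk₀N, hk₀sat⟩ := Nat.find_spec hQ
    have hk₀min : ∀ j < Nat.find hQ, ¬ sat j (pr j z) := by
      intro j hj hsatj
      exact (Nat.find_min hQ hj) ⟨by omega, hsatj⟩
    refine Set.mem_iUnion.mpr ⟨Nat.find hQ, Set.mem_iUnion₂.mpr ⟨pr (Nat.find hQ) z, ?_, ?_⟩⟩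
    · rw [h𝒮def]
      simp only [h𝒞def, Finset.mem_coe]
      rw [if_pos hk₀N, Finset.mem_filter]
      refine ⟨?_, hk₀sat, ?_⟩
      · obtain ⟨z', hz'S, hz'pr⟩ := hsatpos _ _ hk₀sat
        exact Finset.mem_image.mpr ⟨z', hz'S, hz'pr⟩
      · intro j hj
        rw [hprcomp j (Nat.find hQ) hj.le hk₀N z]
        exact hk₀min j hj
    · exact mem_dyCube_anc hk₀N z hxz
  have hadm : (∀ k, (𝒮 k).Finite) ∧ (∀ k, 𝒮 k ≠ ∅ → δ ≤ (2:ℝ)⁻¹ ^ k) ∧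
      X ⊆ ⋃ k, ⋃ z ∈ 𝒮 k, dyCube m k z := by
    refine ⟨fun k => (𝒞 k).finite_toSet, fun k hk => ?_, hcover⟩
    by_cases hkN : k ≤ N
    · exact le_trans hδN (pow_le_pow_of_le_one (by norm_num) (by norm_num) hkN)
    · exfalso
      apply hk
      rw [h𝒮def]
      simp only [h𝒞def]
      rw [if_neg hkN]
      simp
  have hle : ENNReal.ofReal κ ≤
      ∑' k, ((𝒮 k).ncard : ℝ≥0∞) * (((2:ℝ≥0∞)⁻¹ ^ k) ^ (s : ℝ)) := by
    rw [← hcont, dyContent]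
    exact iInf_le_of_le 𝒮 (iInf_le_of_le hadm le_rfl)
  have hncard : ∀ k, ((𝒮 k).ncard : ℝ≥0∞) = ((𝒞 k).card : ℝ≥0∞) := by
    intro k
    rw [h𝒮def]
    norm_cast
    exact Set.ncard_coe_finset _
  have htsum : ∑' k, ((𝒮 k).ncard : ℝ≥0∞) * (((2:ℝ≥0∞)⁻¹ ^ k) ^ (s : ℝ)) =
      ∑ k ∈ Finset.range (N+1), ((𝒞 k).card : ℝ≥0∞) * (((2:ℝ≥0∞)⁻¹ ^ k) ^ (s : ℝ)) := by
    simp_rw [hncard]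
    refine tsum_eq_sum ?_
    intro k hk
    rw [Finset.mem_range, Nat.lt_succ_iff] at hk
    have : 𝒞 k = ∅ := by
      simp only [h𝒞def]
      rw [if_neg hk]
    rw [this]
    simp
  have hreal : κ ≤ ∑ k ∈ Finset.range (N+1), ((𝒞 k).card : ℝ) * (((2:ℝ)⁻¹ ^ k) ^ s) := by
    have hterm : ∀ k, ((𝒞 k).card : ℝ≥0∞) * (((2:ℝ≥0∞)⁻¹ ^ k) ^ (s : ℝ)) =
        ENNReal.ofReal (((𝒞 k).card : ℝ) * (((2:ℝ)⁻¹ ^ k) ^ s)) := by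
      intro k
      rw [ENNReal.ofReal_mul (Nat.cast_nonneg _)]
      congr 1
      · exact (ENNReal.ofReal_natCast _).symm
      · rw [← ENNReal.ofReal_rpow_of_pos (pow_pos (by norm_num) k)]
        congr 1
        rw [ENNReal.ofReal_pow (by norm_num)]
        congr 1
        rw [show ((2:ℝ)⁻¹) = (2:ℝ)⁻¹ from rfl, ENNReal.ofReal_inv_of_pos (by norm_num)]
        norm_num
    rw [htsum] at hle
    simp_rw [hterm] at hle
    rw [← ENNReal.ofReal_sum_of_nonneg (fun k _ =>
      mul_nonneg (Nat.cast_nonneg _) (Real.rpow_nonneg (pow_nonneg (by norm_num) k) s))] at hle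
    exact (ENNReal.ofReal_le_ofReal_iff (Finset.sum_nonneg (fun k _ =>
      mul_nonneg (Nat.cast_nonneg _) (Real.rpow_nonneg (pow_nonneg (by norm_num) k) s)))).mp hle
  set B : ℝ := ((2:ℝ)⁻¹ ^ N) ^ s with hBdef
  have hBpos : (0:ℝ) < B := Real.rpow_pos_of_pos (by positivity) s
  have hsplit : ∀ k, k ≤ N → (((2:ℝ)⁻¹ ^ k) ^ s) = T k * B := by
    intro k hk
    rw [hTdef, hBdef]
    dsimp only
    rw [← Real.mul_rpow (by positivity) (by positivity)]
    congr 1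
    have h1 : (2:ℝ) ^ (N - k) * 2 ^ k = 2 ^ N := by
      rw [← pow_add]; congr 1; omega
    rw [inv_pow, inv_pow]
    field_simp
    linarith [h1]
  have hkterm : ∀ k ∈ Finset.range (N+1),
      ((𝒞 k).card : ℝ) * (((2:ℝ)⁻¹ ^ k) ^ s) ≤
        ∑ w ∈ 𝒞 k, 2 * B * ((S.filter (fun z' => pr k z' = w)).card : ℝ) := by
    intro k hk
    rw [Finset.mem_range, Nat.lt_succ_iff] at hk
    rw [hsplit k hk]
    rw [show ((𝒞 k).card : ℝ) * (T k * B) = ∑ _w ∈ 𝒞 k, T k * B by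
      rw [Finset.sum_const, nsmul_eq_mul]]
    refine Finset.sum_le_sum (fun w hw => ?_)
    have hsat : sat k w := by
      simp only [h𝒞def] at hw
      rw [if_pos hk, Finset.mem_filter] at hw
      exact hw.2.1
    rw [hsatdef] at hsat
    calc T k * B ≤ (2 * ((S.filter (fun z' => pr k z' = w)).card : ℝ)) * B :=
          mul_le_mul_of_nonneg_right hsat hBpos.le
      _ = 2 * B * ((S.filter (fun z' => pr k z' = w)).card : ℝ) := by ring
  have hdisj : ∑ k ∈ Finset.range (N+1), ∑ w ∈ 𝒞 k,
      (S.filter (fun z' => pr k z' = w)).card ≤ S.card := by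
    have hswap : ∑ k ∈ Finset.range (N+1), ∑ w ∈ 𝒞 k,
        (S.filter (fun z' => pr k z' = w)).card
        = ∑ z ∈ S, ∑ k ∈ Finset.range (N+1),
            ∑ w ∈ 𝒞 k, (if pr k z = w then 1 else 0) := by
      simp_rw [Finset.card_filter]
      calc ∑ k ∈ Finset.range (N+1), ∑ w ∈ 𝒞 k, ∑ z ∈ S, (if pr k z = w then 1 else 0)
          = ∑ k ∈ Finset.range (N+1), ∑ z ∈ S, ∑ w ∈ 𝒞 k, (if pr k z = w then 1 else 0) :=
            Finset.sum_congr rfl (fun k _ => Finset.sum_comm)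
        _ = ∑ z ∈ S, ∑ k ∈ Finset.range (N+1), ∑ w ∈ 𝒞 k, (if pr k z = w then 1 else 0) :=
            Finset.sum_comm
    have hinner : ∀ z ∈ S, (∑ k ∈ Finset.range (N+1),
        ∑ w ∈ 𝒞 k, (if pr k z = w then 1 else 0)) ≤ 1 := by
      intro z hzS
      have h1 : ∀ k, (∑ w ∈ 𝒞 k, (if pr k z = w then 1 else 0)) =
          if pr k z ∈ 𝒞 k then 1 else 0 :=
        fun k => Finset.sum_ite_eq (𝒞 k) (pr k z) (fun _ => 1)
      simp_rw [h1]
      rw [← Finset.card_filter]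
      refine Finset.card_le_one.mpr ?_
      have hprop : ∀ u ∈ (Finset.range (N+1)).filter (fun k => pr k z ∈ 𝒞 k),
          sat u (pr u z) ∧ ∀ j < u, ¬ sat j (pr j z) := by
        intro u hu
        rw [Finset.mem_filter, Finset.mem_range, Nat.lt_succ_iff] at hu
        obtain ⟨huN, hu𝒞⟩ := hu
        simp only [h𝒞def] at hu𝒞
        rw [if_pos huN, Finset.mem_filter] at hu𝒞
        refine ⟨hu𝒞.2.1, fun j hj hsatj => hu𝒞.2.2 j hj ?_⟩
        rw [hprcomp j u hj.le huN z]
        exact hsatj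
      intro a ha b hb
      by_contra hne
      rcases lt_or_gt_of_ne hne with h | h
      · exact (hprop b hb).2 a h (hprop a ha).1
      · exact (hprop a ha).2 b h (hprop b hb).1
    calc ∑ k ∈ Finset.range (N+1), ∑ w ∈ 𝒞 k, (S.filter (fun z' => pr k z' = w)).card
        = ∑ z ∈ S, ∑ k ∈ Finset.range (N+1),
            ∑ w ∈ 𝒞 k, (if pr k z = w then 1 else 0) := hswap
      _ ≤ ∑ z ∈ S, 1 := Finset.sum_le_sum hinner
      _ = S.card := by simp
  have hκS : κ ≤ 2 * B * S.card := by
    have hcast : (∑ k ∈ Finset.range (N+1), ∑ w ∈ 𝒞 k,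
        ((S.filter (fun z' => pr k z' = w)).card : ℝ)) ≤ (S.card : ℝ) := by
      exact_mod_cast hdisj
    have h2 : ∑ k ∈ Finset.range (N+1), ((𝒞 k).card : ℝ) * (((2:ℝ)⁻¹ ^ k) ^ s)
        ≤ 2 * B * S.card :=
      calc ∑ k ∈ Finset.range (N+1), ((𝒞 k).card : ℝ) * (((2:ℝ)⁻¹ ^ k) ^ s)
          ≤ ∑ k ∈ Finset.range (N+1), ∑ w ∈ 𝒞 k,
              2 * B * ((S.filter (fun z' => pr k z' = w)).card : ℝ) :=
            Finset.sum_le_sum hkterm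
        _ = 2 * B * ∑ k ∈ Finset.range (N+1), ∑ w ∈ 𝒞 k,
              ((S.filter (fun z' => pr k z' = w)).card : ℝ) := by
            simp_rw [Finset.mul_sum]
        _ ≤ 2 * B * S.card :=
            mul_le_mul_of_nonneg_left hcast (by positivity)
    linarith [hreal]
  -- lower bound for S.card
  have hBle : B ≤ (2:ℝ) ^ s * δ ^ s := by
    have h1 : (2:ℝ)⁻¹ ^ N ≤ 2 * δ := by
      have h2 : (2:ℝ)⁻¹ ^ (N+1) = 2⁻¹ ^ N * 2⁻¹ := pow_succ _ _
      rw [h2] at hNδ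
      linarith
    calc B = ((2:ℝ)⁻¹ ^ N) ^ s := hBdef
      _ ≤ (2 * δ) ^ s := Real.rpow_le_rpow (pow_nonneg (by norm_num) N) h1 hs.le
      _ = 2 ^ s * δ ^ s := Real.mul_rpow (by norm_num) hδ.le
  have hκS2 : κ ≤ 2 * (2:ℝ) ^ s * δ ^ s * S.card := by
    have hc0 : (0:ℝ) ≤ (S.card : ℝ) := Nat.cast_nonneg _
    nlinarith [hκS, hBle, hBpos]
  -- parity selection
  set par : (Fin m → ℕ) → (Fin m → Bool) := fun z i => decide (z i % 2 = 1) with hpardef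
  obtain ⟨ε, hε⟩ : ∃ ε : Fin m → Bool, ∀ ε' : Fin m → Bool,
      (S.filter (fun z => par z = ε')).card ≤ (S.filter (fun z => par z = ε)).card := by
    obtain ⟨ε, _, hε⟩ := Finset.exists_max_image (Finset.univ : Finset (Fin m → Bool))
      (fun ε => (S.filter (fun z => par z = ε)).card) Finset.univ_nonempty
    exact ⟨ε, fun ε' => hε ε' (Finset.mem_univ _)⟩
  set Sε := S.filter (fun z => par z = ε) with hSεdef
  have hSεcard : S.card ≤ 2 ^ m * Sε.card := by
    have h1 : S.card = ∑ ε' ∈ (Finset.univ : Finset (Fin m → Bool)),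
        (S.filter (fun z => par z = ε')).card :=
      Finset.card_eq_sum_card_fiberwise (fun z _ => Finset.mem_univ _)
    have h2 : ∑ ε' ∈ (Finset.univ : Finset (Fin m → Bool)),
        (S.filter (fun z => par z = ε')).card ≤
          (Finset.univ : Finset (Fin m → Bool)).card • Sε.card :=
      Finset.sum_le_card_nsmul _ _ _ (fun ε' _ => hε ε')
    rw [h1]
    have h3 : (Finset.univ : Finset (Fin m → Bool)).card = 2 ^ m := by
      simp [Finset.card_univ]
    rw [h3, smul_eq_mul] at h2
    exact h2
  -- the final set P
  set P := Sε.image p with hPdef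
  have hSεD : ∀ z ∈ Sε, z ∈ D := fun z hz => hSGood.1 (Finset.mem_filter.mp hz).1
  have hpinj : Set.InjOn p Sε := by
    intro z hz z' hz' hpz
    by_contra hne
    exact dyCube_disj hne (hpmem z (hSεD z hz)).2 (hpz ▸ (hpmem z' (hSεD z' hz')).2)
  have hPcard : P.card = Sε.card := Finset.card_image_of_injOn hpinj
  refine ⟨P, ?_, ⟨?_, ?_⟩, ?_⟩
  · -- P ⊆ X
    intro y hy
    rw [Finset.mem_coe, hPdef] at hy
    obtain ⟨z, hz, rfl⟩ := Finset.mem_image.mp hy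
    exact (hpmem z (hSεD z hz)).1
  · -- separation
    intro x hx y hy hxy
    obtain ⟨z, hz, rfl⟩ := Finset.mem_image.mp hx
    obtain ⟨z', hz', rfl⟩ := Finset.mem_image.mp hy
    have hne : z ≠ z' := fun h => hxy (by rw [h])
    obtain ⟨i, hi⟩ : ∃ i, z i ≠ z' i := by
      by_contra hc
      push_neg at hc
      exact hne (funext hc)
    have hpar : par z = par z' := by
      rw [(Finset.mem_filter.mp hz).2, (Finset.mem_filter.mp hz').2]
    have hmod : z i % 2 = z' i % 2 := by
      have h1 := congrFun hpar i
      simp only [hpardef] at h1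
      have h2 := decide_eq_decide.mp h1
      omega
    have h2 : z i + 2 ≤ z' i ∨ z' i + 2 ≤ z i := by omega
    have hz1 := (hpmem z (hSεD z hz)).2 i
    have hz'1 := (hpmem z' (hSεD z' hz')).2 i
    have hdist : (2:ℝ)⁻¹ ^ N ≤ |p z i - p z' i| := by
      have hN2 : (2:ℝ)⁻¹ ^ N = 1 / 2 ^ N := by rw [inv_pow, one_div]
      rcases h2 with h | h
      · have e0 : ((z i : ℝ)) + 2 ≤ (z' i : ℝ) := by exact_mod_cast h
        have e1 : ((z i:ℝ) + 2) / 2 ^ N ≤ ((z' i : ℝ)) / 2 ^ N := by gcongr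
        have e2 : ((z i:ℝ) + 2) / 2 ^ N - ((z i:ℝ) + 1) / 2 ^ N = 1 / 2 ^ N := by ring
        have e3 : 1 / 2 ^ N ≤ p z' i - p z i := by linarith [hz1.2, hz'1.1]
        rw [hN2, abs_sub_comm]
        exact le_trans e3 (le_abs_self _)
      · have e0 : ((z' i : ℝ)) + 2 ≤ (z i : ℝ) := by exact_mod_cast h
        have e1 : ((z' i:ℝ) + 2) / 2 ^ N ≤ ((z i : ℝ)) / 2 ^ N := by gcongr
        have e2 : ((z' i:ℝ) + 2) / 2 ^ N - ((z' i:ℝ) + 1) / 2 ^ N = 1 / 2 ^ N := by ring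
        have e3 : 1 / 2 ^ N ≤ p z i - p z' i := by linarith [hz'1.2, hz1.1]
        rw [hN2]
        exact le_trans e3 (le_abs_self _)
    calc δ ≤ (2:ℝ)⁻¹ ^ N := hδN
      _ ≤ |p z i - p z' i| := hdist
      _ = dist (p z i) (p z' i) := (Real.dist_eq _ _).symm
      _ ≤ dist (p z) (p z') := dist_le_pi_dist (p z) (p z') i
  · -- counting
    clear hκS hκS2 hBle hBpos hreal hle htsum hncard hkterm hdisj hcover hadm
    clear hsatex hsatpos hprcomp hsplit hBdef h𝒞def h𝒮def hsatdef hGoodEmpty hXcube hSmax hε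
    clear_value B 𝒮 𝒞 sat
    clear B 𝒮 𝒞 sat
    intro x r hδr hr1
    have hr0 : (0:ℝ) ≤ r := hδ.le.trans hδr
    -- choose a comparison scale k
    obtain ⟨k, hkN, hrk, hk2r⟩ : ∃ k, k ≤ N ∧ r ≤ (2:ℝ)⁻¹ ^ k ∧ (2:ℝ)⁻¹ ^ k ≤ 2 * r := by
      set K := (Finset.range (N+1)).filter (fun k => r ≤ (2:ℝ)⁻¹ ^ k) with hKdef
      have hKne : K.Nonempty := ⟨0, by
        rw [hKdef, Finset.mem_filter, Finset.mem_range]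
        exact ⟨by omega, by simpa using hr1⟩⟩
      have hkK' := K.max'_mem hKne
      have hkK : K.max' hKne ≤ N ∧ r ≤ (2:ℝ)⁻¹ ^ (K.max' hKne) := by
        have h1 := (Finset.mem_filter.mp hkK').1
        have h2 := (Finset.mem_filter.mp hkK').2
        rw [Finset.mem_range, Nat.lt_succ_iff] at h1
        exact ⟨h1, h2⟩
      refine ⟨K.max' hKne, hkK.1, hkK.2, ?_⟩
      rcases eq_or_lt_of_le hkK.1 with heq | hlt
      · rw [heq]
        have hp : (2:ℝ)⁻¹ ^ (N+1) = 2⁻¹ ^ N * 2⁻¹ := pow_succ _ _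
        rw [hp] at hNδ
        linarith
      · have hk1 : K.max' hKne + 1 ∉ K := fun hmem => by
          have := K.le_max' _ hmem
          omega
        have hnot : ¬ r ≤ (2:ℝ)⁻¹ ^ (K.max' hKne + 1) := by
          intro hc
          exact hk1 (Finset.mem_filter.mpr ⟨Finset.mem_range.mpr (by omega), hc⟩)
        push_neg at hnot
        have hp : (2:ℝ)⁻¹ ^ (K.max' hKne + 1) = 2⁻¹ ^ (K.max' hKne) * 2⁻¹ :=
          pow_succ _ _
        rw [hp] at hnot
        linarith
    -- reduce the ncard to a Finset computation
    have hset : ((P : Set (Fin m → ℝ)) ∩ closedBall x r) =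
        ↑(P.filter (fun y => y ∈ closedBall x r)) := by
      ext y
      simp [Finset.coe_filter]
    rw [hset, Set.ncard_coe_finset]
    set F := S.filter (fun z => p z ∈ closedBall x r) with hFdef
    have hPF : (P.filter (fun y => y ∈ closedBall x r)).card ≤ F.card := by
      have hsub : P.filter (fun y => y ∈ closedBall x r) ⊆ F.image p := by
        intro y hy
        rw [Finset.mem_filter] at hy
        obtain ⟨z, hz, rfl⟩ := Finset.mem_image.mp hy.1
        exact Finset.mem_image.mpr ⟨z, Finset.mem_filter.mpr
          ⟨(Finset.mem_filter.mp hz).1, hy.2⟩, rfl⟩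
      calc (P.filter (fun y => y ∈ closedBall x r)).card ≤ (F.image p).card :=
            Finset.card_le_card hsub
        _ ≤ F.card := Finset.card_image_le
    set W := F.image (pr k) with hWdef
    have hFW : F.card = ∑ w ∈ W, (F.filter (fun z => pr k z = w)).card :=
      Finset.card_eq_sum_card_fiberwise (fun z hz => Finset.mem_image_of_mem _ hz)
    have hfib : ∀ w ∈ W, ((F.filter (fun z => pr k z = w)).card : ℝ) ≤ T k := by
      intro w hw
      have hsub : F.filter (fun z => pr k z = w) ⊆ S.filter (fun z => pr k z = w) :=
        Finset.filter_subset_filter _ (Finset.filter_subset _ _)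
      calc ((F.filter (fun z => pr k z = w)).card : ℝ)
          ≤ ((S.filter (fun z => pr k z = w)).card : ℝ) := by
            exact_mod_cast Finset.card_le_card hsub
        _ ≤ T k := hSGood.2 k hkN w
    have h2k : (0:ℝ) < 2 ^ k := by positivity
    have hWcoord : ∀ w ∈ W, ∀ i, ((w i : ℝ)) ≤ (x i + r) * 2 ^ k ∧
        (x i - r) * 2 ^ k - 1 < (w i : ℝ) := by
      intro w hw i
      obtain ⟨z, hzF, rfl⟩ := Finset.mem_image.mp hw
      rw [hFdef, Finset.mem_filter] at hzF
      obtain ⟨hzS, hzball⟩ := hzF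
      have hzD : z ∈ D := hSGood.1 hzS
      have hcube : p z ∈ dyCube m k (pr k z) := mem_dyCube_anc hkN z (hpmem z hzD).2
      have hc := hcube i
      have hball : |p z i - x i| ≤ r := by
        have h1 : dist (p z i) (x i) ≤ dist (p z) x := dist_le_pi_dist _ _ i
        have h2 : dist (p z) x ≤ r := Metric.mem_closedBall.mp hzball
        rw [Real.dist_eq] at h1
        linarith
      rw [abs_le] at hball
      constructor
      · have hcc := hc.1
        rw [div_le_iff₀ h2k] at hcc
        have hm : p z i * 2 ^ k ≤ (x i + r) * 2 ^ k :=
          mul_le_mul_of_nonneg_right (by linarith [hball.2]) h2k.le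
        linarith
      · have hcc := hc.2
        rw [lt_div_iff₀ h2k] at hcc
        have hm : (x i - r) * 2 ^ k ≤ p z i * 2 ^ k :=
          mul_le_mul_of_nonneg_right (by linarith [hball.1]) h2k.le
        linarith
    have hWsep : ∀ w ∈ W, ∀ w' ∈ W, ∀ i, w i ≤ w' i + 2 := by
      intro w hw w' hw' i
      have h1 := (hWcoord w hw i).1
      have h2 := (hWcoord w' hw' i).2
      have hrk2 : r * 2 ^ k ≤ 1 := by
        have hinv : (2:ℝ)⁻¹ ^ k * 2 ^ k = 1 := by
          rw [inv_pow, inv_mul_cancel₀ (ne_of_gt h2k)]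
        calc r * 2 ^ k ≤ (2:ℝ)⁻¹ ^ k * 2 ^ k :=
              mul_le_mul_of_nonneg_right hrk h2k.le
          _ = 1 := hinv
      have hexp : (x i + r) * 2 ^ k = (x i - r) * 2 ^ k + 2 * (r * 2 ^ k) := by ring
      have h3 : (w i : ℝ) < (w' i : ℝ) + 3 := by linarith
      have h4 : w i < w' i + 3 := by exact_mod_cast h3
      omega
    have hWcard : W.card ≤ 3 ^ m := by
      rcases Finset.eq_empty_or_nonempty W with he | hne
      · rw [he]
        simp
      · set a : Fin m → ℕ := fun i => (W.image (fun w => w i)).min' (hne.image _) with hadef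
        have ha_le : ∀ w ∈ W, ∀ i, a i ≤ w i := fun w hw i =>
          Finset.min'_le _ _ (Finset.mem_image_of_mem _ hw)
        have ha_mem : ∀ i, ∃ w' ∈ W, w' i = a i := by
          intro i
          obtain ⟨w', hw', he'⟩ := Finset.mem_image.mp ((W.image (fun w => w i)).min'_mem _)
          exact ⟨w', hw', he'⟩
        have hbound : ∀ w ∈ W, ∀ i, w i - a i ≤ 2 := by
          intro w hw i
          obtain ⟨w', hw', he'⟩ := ha_mem i
          have := hWsep w hw w' hw' i
          omega
        set g : (Fin m → ℕ) → (Fin m → Fin 3) :=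
          fun w i => (⟨min (w i - a i) 2, by omega⟩ : Fin 3) with hgdef
        have hmaps : ∀ w ∈ W, g w ∈ (Finset.univ : Finset (Fin m → Fin 3)) :=
          fun w _ => Finset.mem_univ _
        have hinj : Set.InjOn g ↑W := by
          intro w hw w' hw' heq
          funext i
          have h1 : (g w i).val = (g w' i).val := by rw [heq]
          have h2 : (g w i).val = min (w i - a i) 2 := rfl
          have h3 : (g w' i).val = min (w' i - a i) 2 := rfl
          rw [h2, h3] at h1
          have h4 := hbound w (Finset.mem_coe.mp hw) i
          have h5 := hbound w' (Finset.mem_coe.mp hw') i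
          have h6 := ha_le w (Finset.mem_coe.mp hw) i
          have h7 := ha_le w' (Finset.mem_coe.mp hw') i
          omega
        have hcard := Finset.card_le_card_of_injOn g hmaps hinj
        calc W.card ≤ (Finset.univ : Finset (Fin m → Fin 3)).card := hcard
          _ = 3 ^ m := by simp
    have hTk : T k ≤ (2:ℝ) ^ s * (r / δ) ^ s := by
      have hNk : (2:ℝ) ^ (N - k) * 2⁻¹ ^ N = 2⁻¹ ^ k := by
        have h1 : (2:ℝ) ^ (N - k) * 2 ^ k = 2 ^ N := by
          rw [← pow_add]; congr 1; omega
        rw [inv_pow, inv_pow]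
        field_simp
        linarith [h1]
      have hbase : (2:ℝ) ^ (N - k) ≤ 2 * r / δ := by
        rw [le_div_iff₀ hδ]
        calc (2:ℝ) ^ (N - k) * δ ≤ 2 ^ (N - k) * 2⁻¹ ^ N := by
              exact mul_le_mul_of_nonneg_left hδN (pow_nonneg (by norm_num) _)
          _ = 2⁻¹ ^ k := hNk
          _ ≤ 2 * r := hk2r
      calc T k = ((2:ℝ) ^ (N - k)) ^ s := by rw [hTdef]
        _ ≤ (2 * r / δ) ^ s :=
            Real.rpow_le_rpow (pow_nonneg (by norm_num) _) hbase hs.le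
        _ = (2:ℝ) ^ s * (r / δ) ^ s := by
            rw [show (2 * r / δ) = 2 * (r / δ) by ring,
              Real.mul_rpow (by norm_num) (div_nonneg hr0 hδ.le)]
    calc ((P.filter (fun y => y ∈ closedBall x r)).card : ℝ)
        ≤ (F.card : ℝ) := by exact_mod_cast hPF
      _ = ∑ w ∈ W, ((F.filter (fun z => pr k z = w)).card : ℝ) := by
          rw [hFW]; push_cast; ring
      _ ≤ ∑ w ∈ W, T k := Finset.sum_le_sum hfib
      _ = W.card * T k := by rw [Finset.sum_const, nsmul_eq_mul]
      _ ≤ 3 ^ m * T k :=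
          mul_le_mul_of_nonneg_right (by exact_mod_cast hWcard) (hT0 k)
      _ ≤ 3 ^ m * ((2:ℝ) ^ s * (r / δ) ^ s) :=
          mul_le_mul_of_nonneg_left hTk (by positivity)
      _ = 3 ^ m * (2:ℝ) ^ s * (r / δ) ^ s := by ring

  · -- cardinality
    have hcard1 : (S.card : ℝ) ≤ 2 ^ m * P.card := by
      rw [hPcard]
      exact_mod_cast hSεcard
    have hfin : κ ≤ 2 * (2:ℝ) ^ s * 2 ^ m * δ ^ s * P.card := by
      have hmul : 2 * (2:ℝ) ^ s * δ ^ s * S.card ≤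
          2 * (2:ℝ) ^ s * δ ^ s * (2 ^ m * P.card) :=
        mul_le_mul_of_nonneg_left hcard1
          (mul_pos (mul_pos two_pos h2s) (Real.rpow_pos_of_pos hδ s)).le
      calc κ ≤ 2 * (2:ℝ) ^ s * δ ^ s * S.card := hκS2
        _ ≤ 2 * (2:ℝ) ^ s * δ ^ s * (2 ^ m * P.card) := hmul
        _ = 2 * (2:ℝ) ^ s * 2 ^ m * δ ^ s * P.card := by ring
    have hpos : (0:ℝ) < 2 * (2:ℝ) ^ s * 2 ^ m * δ ^ s :=
      mul_pos (mul_pos (mul_pos two_pos h2s) (pow_pos two_pos m))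
        (Real.rpow_pos_of_pos hδ s)
    rw [Real.rpow_neg hδ.le]
    rw [show (2 * (2:ℝ) ^ s * 2 ^ m)⁻¹ * (κ * (δ ^ s)⁻¹) =
        κ / (2 * (2:ℝ) ^ s * 2 ^ m * δ ^ s) by
      field_simp]
    rw [div_le_iff₀ hpos]
    linarith [hfin]
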